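/- arXiv:2305.12023 — 2 statements merged into one kernel-verified Lean document; each statement's English description precedes it below -/
import Mathlib

section
/- For every finite simple graph G with at least one vertex, the stretch-width of G is at most the component twin-width of G minus 1, i.e., stw(G) ≤ ctww(G) − 1. -/
open Finset

noncomputable section
open scoped Classical
set_option linter.unusedSectionVars false
set_option linter.unusedVariables false

namespace StretchPaper

/-! ### Partitions, red graphs, component twin-width and stretch-width of graphs -/

variable {V : Type} [Fintype V] [DecidableEq V]

/-- Two parts are inhomogeneous in `G`. -/
def Inhomog (G : SimpleGraph V) (X Y : Finset V) : Prop :=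
  (∃ x ∈ X, ∃ y ∈ Y, G.Adj x y) ∧ (∃ x ∈ X, ∃ y ∈ Y, ¬ G.Adj x y)

lemma Inhomog.symm {G : SimpleGraph V} {X Y : Finset V} (h : Inhomog G X Y) :
    Inhomog G Y X := by
  obtain ⟨⟨x, hx, y, hy, hxy⟩, ⟨x', hx', y', hy', hxy'⟩⟩ := h
  exact ⟨⟨y, hy, x, hx, hxy.symm⟩, ⟨y', hy', x', hx', fun hc => hxy' hc.symm⟩⟩

/-- `P` is obtained from `Q` by merging two parts. -/
def MergeStep (Q P : Finpartition (Finset.univ : Finset V)) : Prop :=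
  ∃ A ∈ Q.parts, ∃ B ∈ Q.parts, A ≠ B ∧
    P.parts = insert (A ∪ B) ((Q.parts.erase A).erase B)

/-- `l = [P_n, …, P_1]` is a partition sequence: it starts at the partition into
singletons, ends at the partition with the single part `univ`, and each partition is
obtained from the previous one by merging two parts. -/
def IsPartitionSeq (l : List (Finpartition (Finset.univ : Finset V))) : Prop :=
  (∃ P, l.head? = some P ∧ ∀ X ∈ P.parts, X.card = 1) ∧
  (∃ P, l.getLast? = some P ∧ P.parts = {Finset.univ}) ∧
  l.Chain' MergeStep

/-- The red graph of a partition: parts are vertices, inhomogeneous pairs are edges. -/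
def redGraph (G : SimpleGraph V) (P : Finpartition (Finset.univ : Finset V)) :
    SimpleGraph {X : Finset V // X ∈ P.parts} where
  Adj X Y := X ≠ Y ∧ Inhomog G X.1 Y.1
  symm := ⟨fun X Y h => ⟨h.1.symm, h.2.symm⟩⟩
  loopless := ⟨fun X h => h.1 rfl⟩

/-- The largest number of parts contained in a single connected component of the red graph. -/
def maxRedComponentSize (G : SimpleGraph V) (P : Finpartition (Finset.univ : Finset V)) : ℕ :=
  Finset.univ.sup fun X : {X : Finset V // X ∈ P.parts} =>
    (Finset.univ.filter fun Y => (redGraph G P).Reachable X Y).card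

/-- Component twin-width. -/
def ctww (G : SimpleGraph V) : ℕ :=
  sInf { k | ∃ l, IsPartitionSeq l ∧ ∀ P ∈ l, maxRedComponentSize G P ≤ k }

section Ord
variable [LinearOrder V]

/-- The convex closure (span) of a set of vertices along the linear order. -/
def conv (X : Finset V) : Finset V :=
  Finset.univ.filter fun v => (∃ a ∈ X, a ≤ v) ∧ ∃ b ∈ X, v ≤ b

/-- Two sets are in conflict if their spans intersect. -/
def Conflict (X Y : Finset V) : Prop := (conv X ∩ conv Y).Nonempty

/-- The union of a part `X` and of all parts adjacent to `X` in the red graph. -/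
def redClosedNbhd (G : SimpleGraph V) (P : Finpartition (Finset.univ : Finset V))
    (X : Finset V) : Finset V :=
  X ∪ (P.parts.filter fun Y => Y ≠ X ∧ Inhomog G X Y).biUnion id

/-- The stretch of a part `X` of `P`: the number of parts `Y ≠ X` that conflict with the
union of `X` and all parts adjacent to `X` in the red graph (i.e. that interfere with `X`). -/
def stretchPart (G : SimpleGraph V) (P : Finpartition (Finset.univ : Finset V))
    (X : Finset V) : ℕ :=
  ((P.parts.erase X).filter fun Y => Conflict Y (redClosedNbhd G P X)).card

/-- The stretch of a partition: the maximum stretch of a part. -/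
def stretchPartition (G : SimpleGraph V) (P : Finpartition (Finset.univ : Finset V)) : ℕ :=
  P.parts.sup fun X => stretchPart G P X

/-- Stretch-width of the ordered graph `(G, ≤)`. -/
def stwOrd (G : SimpleGraph V) : ℕ :=
  sInf { k | ∃ l, IsPartitionSeq l ∧ ∀ P ∈ l, stretchPartition G P ≤ k }

end Ord

/-- Stretch-width of `G`: minimum over all linear orders on the vertices. -/
def stw (G : SimpleGraph V) : ℕ :=
  sInf (Set.range fun L : LinearOrder V => @stwOrd V _ _ L G)


/-! ### Symmetric 0,1-matrices: stretch-width and divisions -/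

variable {n : ℕ}

/-- The zone `R × C` of `M` is non-constant. -/
def NonConstZone (M : Fin n → Fin n → Bool) (R C : Finset (Fin n)) : Prop :=
  ∃ r ∈ R, ∃ r' ∈ R, ∃ c ∈ C, ∃ c' ∈ C, M r c ≠ M r' c'

/-- `D_R`: the union of `R` and of all parts `C` of `P` with `R × C` non-constant. -/
def matBag (M : Fin n → Fin n → Bool) (P : Finpartition (Finset.univ : Finset (Fin n)))
    (R : Finset (Fin n)) : Finset (Fin n) :=
  R ∪ (P.parts.filter fun C => NonConstZone M R C).biUnion id

/-- The stretch value of a part `R` of `P`. -/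
def matStretchPart (M : Fin n → Fin n → Bool) (P : Finpartition (Finset.univ : Finset (Fin n)))
    (R : Finset (Fin n)) : ℕ :=
  (P.parts.filter fun Q => Conflict Q (matBag M P R)).card

/-- The stretch value of a partition. -/
def matStretch (M : Fin n → Fin n → Bool)
    (P : Finpartition (Finset.univ : Finset (Fin n))) : ℕ :=
  P.parts.sup fun R => matStretchPart M P R

/-- Stretch-width of a symmetric 0,1-matrix. -/
def stwM (M : Fin n → Fin n → Bool) : ℕ :=
  sInf { k | ∃ l : List (Finpartition (Finset.univ : Finset (Fin n))),
    IsPartitionSeq l ∧ ∀ P ∈ l, matStretch M P ≤ k }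

/-- A symmetric division `(I_1, …, I_p)` of `[n]` into consecutive nonempty intervals;
out-of-range indices denote the empty set. -/
structure SymDiv (n : ℕ) where
  p : ℕ
  I : ℤ → Finset (Fin n)
  out_empty : ∀ j : ℤ, (j < 1 ∨ (p : ℤ) < j) → I j = ∅
  in_nonempty : ∀ j : ℤ, 1 ≤ j → j ≤ (p : ℤ) → (I j).Nonempty
  interval : ∀ j : ℤ, ∀ a ∈ I j, ∀ c ∈ I j, ∀ b : Fin n, a ≤ b → b ≤ c → b ∈ I j
  increasing : ∀ j : ℤ, ∀ a ∈ I j, ∀ b ∈ I (j + 1), a < b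
  covers : ∀ v : Fin n, ∃ j : ℤ, v ∈ I j

/-- The restriction of row `r` of `M` to the columns outside `U`. -/
def rowRestr (M : Fin n → Fin n → Bool) (U : Finset (Fin n)) (r : Fin n) :
    Fin n → Option Bool :=
  fun c => if c ∈ U then none else some (M r c)

/-- The union `I_j ∪ I_{j+1} ∪ … ∪ I_{j+k-1}`. -/
def window (D : SymDiv n) (j : ℤ) (k : ℕ) : Finset (Fin n) :=
  (Finset.Icc j (j + (k : ℤ) - 1)).biUnion D.I

/-- The part `I_i` of `D` is `k`-wide. -/
def WidePart (M : Fin n → Fin n → Bool) (D : SymDiv n) (k : ℕ) (i : ℤ) : Prop :=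
  ∀ j : ℤ, j ≤ i → i ≤ j + (k : ℤ) - 1 →
    k ≤ ((D.I i).image (rowRestr M (window D j k))).card

/-- The division `D` is `k`-wide. -/
def WideDiv (M : Fin n → Fin n → Bool) (D : SymDiv n) (k : ℕ) : Prop :=
  ∀ i : ℤ, 1 ≤ i → i ≤ (D.p : ℤ) → WidePart M D k i

/-- The division `D` is `k`-diagonal. -/
def DiagDiv (M : Fin n → Fin n → Bool) (D : SymDiv n) (k : ℕ) : Prop :=
  ∀ i : ℤ, 1 ≤ i → i ≤ (D.p : ℤ) → ¬ WidePart M D k i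

/-- `D` is obtained from `E` by merging two consecutive intervals. -/
def DivMerge (E D : SymDiv n) : Prop :=
  D.p + 1 = E.p ∧ ∃ m : ℤ, 1 ≤ m ∧ m < (E.p : ℤ) ∧
    (∀ j : ℤ, j < m → D.I j = E.I j) ∧
    D.I m = E.I m ∪ E.I (m + 1) ∧
    (∀ j : ℤ, m < j → D.I j = E.I (j + 1))

/-- `l = [D_n, …, D_1]` is a sequence of symmetric divisions: from the division into
`n` singletons to the division with one part, merging two consecutive intervals at each step. -/
def IsDivSeq (l : List (SymDiv n)) : Prop :=
  (∃ D, l.head? = some D ∧ D.p = n) ∧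
  (∃ D, l.getLast? = some D ∧ D.p = 1) ∧
  l.Chain' DivMerge


/-! ### Ordered graphs, crossing edges, overlap graphs -/

section Overlap
variable {α : Type} [LinearOrder α]

/-- The left (smaller) endpoint of an edge. -/
def eL (e : Sym2 α) : α := Sym2.lift ⟨fun a b => min a b, fun a b => min_comm a b⟩ e

/-- The right (larger) endpoint of an edge. -/
def eR (e : Sym2 α) : α := Sym2.lift ⟨fun a b => max a b, fun a b => max_comm a b⟩ e

/-- Two edges cross: `L(e) ≺ L(f) ≺ R(e) ≺ R(f)` or `L(f) ≺ L(e) ≺ R(f) ≺ R(e)`. -/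
def Cross (e f : Sym2 α) : Prop :=
  (eL e < eL f ∧ eL f < eR e ∧ eR e < eR f) ∨
  (eL f < eL e ∧ eL e < eR f ∧ eR f < eR e)

/-- The overlap graph of `(G, ≤)` has a `K_{t,t}` subgraph: two disjoint sets of `t` edges
of `G` each, such that every edge of one set crosses every edge of the other. -/
def OvHasKtt (G : SimpleGraph α) (t : ℕ) : Prop :=
  ∃ A B : Finset (Sym2 α), ↑A ⊆ G.edgeSet ∧ ↑B ⊆ G.edgeSet ∧ Disjoint A B ∧
    A.card = t ∧ B.card = t ∧ ∀ e ∈ A, ∀ f ∈ B, Cross e f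

variable [Fintype α]

/-- The interior of an edge: the vertices strictly between its endpoints. -/
def edgeInterior (e : Sym2 α) : Finset α :=
  Finset.univ.filter fun x => eL e < x ∧ x < eR e

/-- The length of an edge: the number of vertices `x` with `L(e) ≺ x ⪯ R(e)`. -/
def edgeLen (e : Sym2 α) : ℕ := (Finset.univ.filter fun x => eL e < x ∧ x ≤ eR e).card

/-- The maximum length of an edge of `S` (0 if `S` is empty). -/
def lenSup (S : Finset (Sym2 α)) : ℕ := S.sup edgeLen

/-- A rainbow: a set of edges of `G` whose interiors are pairwise nested. -/
def IsRainbow (G : SimpleGraph α) (S : Finset (Sym2 α)) : Prop :=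
  ↑S ⊆ G.edgeSet ∧
  ∀ e ∈ S, ∀ f ∈ S, edgeInterior e ⊆ edgeInterior f ∨ edgeInterior f ⊆ edgeInterior e

/-- A rainbow over the vertex `v`. -/
def IsRainbowOver (G : SimpleGraph α) (S : Finset (Sym2 α)) (v : α) : Prop :=
  IsRainbow G S ∧ ∀ e ∈ S, eL e < v ∧ v < eR e

/-- A maximum rainbow over `v`. -/
def IsMaxRainbowOver (G : SimpleGraph α) (S : Finset (Sym2 α)) (v : α) : Prop :=
  IsRainbowOver G S v ∧ ∀ S' : Finset (Sym2 α), IsRainbowOver G S' v → S'.card ≤ S.card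

end Overlap

/-! ### Balanced separators and tree-decompositions -/

section Sep
variable {V : Type} [Fintype V] [DecidableEq V]

/-- `C` is a `c`-balanced separator of `G`. -/
def IsBalancedSeparator (G : SimpleGraph V) (c : ℝ) (C : Finset V) : Prop :=
  ∃ A B : Finset V, Disjoint A B ∧ A ∪ B = Finset.univ \ C ∧
    (∀ a ∈ A, ∀ b ∈ B, ¬ G.Adj a b) ∧
    (A.card : ℝ) ≤ (1 - c) * (Fintype.card V) ∧
    (B.card : ℝ) ≤ (1 - c) * (Fintype.card V)

/-- `(T, β)` is a tree-decomposition of `G`. -/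
def IsTreeDecomp (G : SimpleGraph V) {m : ℕ} (T : SimpleGraph (Fin m))
    (β : Fin m → Finset V) : Prop :=
  T.Connected ∧ T.IsAcyclic ∧
  (∀ v : V, ∃ t, v ∈ β t) ∧
  (∀ u v : V, G.Adj u v → ∃ t, u ∈ β t ∧ v ∈ β t) ∧
  (∀ v : V, (T.induce {t | v ∈ β t}).Connected)

/-- Treewidth: the minimum width of a tree-decomposition of `G`. -/
def treewidth (G : SimpleGraph V) : ℕ :=
  sInf { k | ∃ (m : ℕ) (T : SimpleGraph (Fin m)) (β : Fin m → Finset V),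
    IsTreeDecomp G T β ∧ (Finset.univ.sup fun t => (β t).card) - 1 ≤ k }

end Sep


/-! ### Subdivisions -/

/-- The internal vertices of a walk (its support minus the two endpoints). -/
def walkInternal {W : Type} {H : SimpleGraph W} {a b : W} (p : H.Walk a b) : List W :=
  p.support.tail.dropLast

/-- `H` is obtained from `G` by subdividing every edge at least `s` times. -/
def IsSubdivisionGE {V W : Type} (G : SimpleGraph V) (H : SimpleGraph W) (s : ℕ) : Prop :=
  ∃ (φ : V ↪ W) (p : ∀ u v : V, G.Adj u v → H.Walk (φ u) (φ v)),
    (∀ u v huv, (p u v huv).IsPath) ∧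
    (∀ u v huv, s + 1 ≤ (p u v huv).length) ∧
    (∀ u v huv, p u v huv = (p v u huv.symm).reverse) ∧
    (∀ u v huv, ∀ x ∈ walkInternal (p u v huv), x ∉ Set.range φ) ∧
    (∀ u v huv, ∀ u' v' h', s(u, v) ≠ s(u', v') →
      ∀ x ∈ walkInternal (p u v huv), x ∉ walkInternal (p u' v' h')) ∧
    (∀ x : W, x ∈ Set.range φ ∨ ∃ u v huv, x ∈ walkInternal (p u v huv)) ∧
    (∀ e ∈ H.edgeSet, ∃ u v huv, e ∈ (p u v huv).edges)

/-- Subdividing the edge `uv` of `G` once: the new vertex is `none : Option V`. -/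
def subdivideOnce {V : Type} (G : SimpleGraph V) (u v : V) : SimpleGraph (Option V) where
  Adj x y :=
    match x, y with
    | some a, some b => G.Adj a b ∧ s(a, b) ≠ s(u, v)
    | some a, none => a = u ∨ a = v
    | none, some b => b = u ∨ b = v
    | none, none => False
  symm := by
    constructor
    rintro (_ | a) (_ | b) h
    · exact h
    · exact h
    · exact h
    · exact ⟨h.1.symm, by rw [Sym2.eq_swap]; exact h.2⟩
  loopless := by
    constructor
    rintro (_ | a) h
    · exact h
    · exact G.irrefl h.1

/-! ### Flattening (iterated subdivisions) -/

/-- The number of vertices strictly between `u` and `v`. -/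
def interiorCount {V : Type} [Fintype V] [LinearOrder V] (u v : V) : ℕ :=
  (Finset.univ.filter fun x => u < x ∧ x < v).card

/-- The ordered graph `H` is obtained from `(G, ≤)` by flattening the edge `uv`, via the
order-embedding `φ` of old vertices and the new vertices `w 0, …, w h` interleaved with
the vertices between `u` and `v`. -/
def IsFlattenStepWith {V W : Type} [Fintype V] [LinearOrder V] [Fintype W] [LinearOrder W]
    (G : SimpleGraph V) (u v : V) (H : SimpleGraph W) (φ : V → W) (w : ℕ → W) : Prop :=
  G.Adj u v ∧ u < v ∧ StrictMono φ ∧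
  (∀ x : W, (∃ a : V, x = φ a) ∨ ∃ i ≤ interiorCount u v, x = w i) ∧
  (∀ a : V, ∀ i ≤ interiorCount u v, φ a ≠ w i) ∧
  (∀ i ≤ interiorCount u v,
    (Finset.univ.filter fun x => u ≤ x ∧ x ≤ v ∧ φ x < w i).card = i + 1) ∧
  (∀ a b : W, H.Adj a b ↔
    ((∃ x y : V, G.Adj x y ∧ s(x, y) ≠ s(u, v) ∧ s(a, b) = s(φ x, φ y)) ∨
     s(a, b) = s(φ u, w 0) ∨
     (∃ i : ℕ, i + 1 ≤ interiorCount u v ∧ s(a, b) = s(w i, w (i + 1))) ∨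
     s(a, b) = s(w (interiorCount u v), φ v)))

/-! ### The graphs `A_3^h` -/

/-- The graph `A_3^h` on vertex set `{0, …, 3^h − 1}`: distinct `u, v` are adjacent iff
`|⌊u/3^l⌋ − ⌊v/3^l⌋| = 3` for some `l < h`. -/
def Agraph (h : ℕ) : SimpleGraph (Fin (3 ^ h)) where
  Adj u v := u ≠ v ∧ ∃ l < h,
    ((u : ℕ) / 3 ^ l = (v : ℕ) / 3 ^ l + 3 ∨ (v : ℕ) / 3 ^ l = (u : ℕ) / 3 ^ l + 3)
  symm := by
    constructor
    rintro u v ⟨hne, l, hl, hd⟩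
    exact ⟨hne.symm, l, hl, hd.symm⟩
  loopless := ⟨fun u h => h.1 rfl⟩




/-! ### Auxiliary material for the proof that `stw G ≤ ctww G - 1` -/

section LexAux

/-- A linear order on lexicographic tuples `Fin m → γ`. -/
noncomputable def lexLO (m : ℕ) (γ : Type) [LinearOrder γ] : LinearOrder (Lex (Fin m → γ)) :=
  @Pi.Lex.linearOrder.{0, 0} (Fin m) (fun _ => γ)
    (inferInstanceAs (LinearOrder (Fin m))) (inferInstanceAs (WellFoundedLT (Fin m)))
    (fun _ => inferInstance)

lemma lexLO_lt_iff {m : ℕ} {γ : Type} [LinearOrder γ] (x y : Lex (Fin m → γ)) :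
    (lexLO m γ).lt x y ↔
      ∃ i, (∀ j, j < i → ofLex x j = ofLex y j) ∧ ofLex x i < ofLex y i :=
  Iff.rfl

lemma lexLO_le_iff {m : ℕ} {γ : Type} [LinearOrder γ] (x y : Lex (Fin m → γ)) :
    (lexLO m γ).le x y ↔ (lexLO m γ).lt x y ∨ x = y := by
  letI := lexLO m γ
  exact le_iff_lt_or_eq

lemma lex_sandwich {m : ℕ} {γ : Type} [LinearOrder γ] {a b c : Fin m → γ}
    (hab : (lexLO m γ).le (toLex a) (toLex b)) (hbc : (lexLO m γ).le (toLex b) (toLex c))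
    {J : Fin m} (hac : ∀ j : Fin m, j ≤ J → a j = c j) :
    ∀ j : Fin m, j ≤ J → a j = b j := by
  classical
  by_contra hcon
  push_neg at hcon
  have hS : (Finset.univ.filter fun j : Fin m => j ≤ J ∧ a j ≠ b j).Nonempty := by
    obtain ⟨j, hj1, hj2⟩ := hcon
    exact ⟨j, by simp [hj1, hj2]⟩
  set S := Finset.univ.filter fun j : Fin m => j ≤ J ∧ a j ≠ b j with hSdef
  set j0 := S.min' hS with hj0def
  have hj0S : j0 ∈ S := S.min'_mem hS
  have hj0J : j0 ≤ J := (Finset.mem_filter.1 hj0S).2.1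
  have hj0ne : a j0 ≠ b j0 := (Finset.mem_filter.1 hj0S).2.2
  have hbelow : ∀ j : Fin m, j < j0 → a j = b j := by
    intro j hj
    by_contra hne
    exact absurd (S.min'_le j (Finset.mem_filter.2 ⟨Finset.mem_univ _, le_trans hj.le hj0J, hne⟩))
      (not_le.2 hj)
  have hlt : a j0 < b j0 := by
    rcases (lexLO_le_iff _ _).1 hab with hlt | heq
    · obtain ⟨i, hbi, hi⟩ := (lexLO_lt_iff _ _).1 hlt
      rcases lt_trichotomy i j0 with h | h | h
      · exact absurd hi (by rw [show (ofLex (toLex a)) i = a i from rfl,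
          show (ofLex (toLex b)) i = b i from rfl, hbelow i h]; exact lt_irrefl _)
      · exact h ▸ hi
      · exact absurd (hbi j0 h) hj0ne
    · exact absurd (congrFun (congrArg ofLex heq) j0) hj0ne
  have hcb : (lexLO m γ).lt (toLex c) (toLex b) := by
    refine (lexLO_lt_iff _ _).2 ⟨j0, ?_, ?_⟩
    · intro j hj
      have h1 : a j = b j := hbelow j hj
      have h2 : a j = c j := hac j (le_trans hj.le hj0J)
      show c j = b j
      rw [← h2, h1]
    · show c j0 < b j0
      have h2 : a j0 = c j0 := hac j0 hj0J
      rw [← h2]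
      exact hlt
  letI := lexLO m γ
  exact absurd (lt_of_le_of_lt hbc hcb) (lt_irrefl _)

end LexAux

section CtwwAux

lemma inhomog_mono {G : SimpleGraph V} {X X' Y Y' : Finset V} (hX : X ⊆ X') (hY : Y ⊆ Y')
    (h : Inhomog G X Y) : Inhomog G X' Y' := by
  obtain ⟨⟨x, hx, y, hy, h1⟩, ⟨x', hx', y', hy', h2⟩⟩ := h
  exact ⟨⟨x, hX hx, y, hY hy, h1⟩, ⟨x', hX hx', y', hY hy', h2⟩⟩

/-- `v` and `w` lie in (possibly different) parts belonging to the same red component. -/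
def SameC (G : SimpleGraph V) (P : Finpartition (Finset.univ : Finset V)) (v w : V) : Prop :=
  ∃ (X : Finset V) (hX : X ∈ P.parts) (Y : Finset V) (hY : Y ∈ P.parts),
    v ∈ X ∧ w ∈ Y ∧ (redGraph G P).Reachable ⟨X, hX⟩ ⟨Y, hY⟩

lemma sameC_refl (G : SimpleGraph V) (P : Finpartition (Finset.univ : Finset V)) (v : V) :
    SameC G P v v := by
  obtain ⟨X, hX, hv⟩ := P.exists_mem (Finset.mem_univ v)
  exact ⟨X, hX, X, hX, hv, hv, SimpleGraph.Reachable.refl _⟩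

lemma sameC_symm {G : SimpleGraph V} {P : Finpartition (Finset.univ : Finset V)} {v w : V}
    (h : SameC G P v w) : SameC G P w v := by
  obtain ⟨X, hX, Y, hY, hv, hw, hr⟩ := h
  exact ⟨Y, hY, X, hX, hw, hv, hr.symm⟩

lemma sameC_trans {G : SimpleGraph V} {P : Finpartition (Finset.univ : Finset V)} {u v w : V}
    (h1 : SameC G P u v) (h2 : SameC G P v w) : SameC G P u w := by
  obtain ⟨X, hX, Y, hY, hu, hv, hr⟩ := h1
  obtain ⟨Y', hY', Z, hZ, hv', hw, hr'⟩ := h2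
  have hYY : Y = Y' := P.eq_of_mem_parts hY hY' hv hv'
  subst hYY
  exact ⟨X, hX, Z, hZ, hu, hw, hr.trans hr'⟩

/-- The union of the parts of the red component of the part containing `v`. -/
def cls (G : SimpleGraph V) (P : Finpartition (Finset.univ : Finset V)) (v : V) : Finset V :=
  Finset.univ.filter (SameC G P v)

lemma mem_cls {G : SimpleGraph V} {P : Finpartition (Finset.univ : Finset V)} {v w : V} :
    w ∈ cls G P v ↔ SameC G P v w := by
  simp [cls]

lemma self_mem_cls (G : SimpleGraph V) (P : Finpartition (Finset.univ : Finset V)) (v : V) :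
    v ∈ cls G P v := mem_cls.2 (sameC_refl G P v)

lemma cls_congr {G : SimpleGraph V} {P : Finpartition (Finset.univ : Finset V)} {v w : V}
    (h : SameC G P v w) : cls G P v = cls G P w := by
  ext x
  simp only [mem_cls]
  exact ⟨fun hx => sameC_trans (sameC_symm h) hx, fun hx => sameC_trans h hx⟩

lemma sameC_of_mergeStep {G : SimpleGraph V} {Q P : Finpartition (Finset.univ : Finset V)}
    (h : MergeStep Q P) {v w : V} (hvw : SameC G Q v w) : SameC G P v w := by
  obtain ⟨A, hA, B, hB, hAB, hparts⟩ := h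
  have hsub : ∀ X : Finset V, X ⊆ (if X = A ∨ X = B then A ∪ B else X) := by
    intro X
    split
    · rename_i hc
      rcases hc with rfl | rfl
      · exact Finset.subset_union_left
      · exact Finset.subset_union_right
    · exact subset_rfl
  have hmem : ∀ {X : Finset V}, X ∈ Q.parts →
      (if X = A ∨ X = B then A ∪ B else X) ∈ P.parts := by
    intro X hX
    rw [hparts]
    split
    · exact Finset.mem_insert_self _ _
    · rename_i hc
      push_neg at hc
      exact Finset.mem_insert_of_mem (Finset.mem_erase.2 ⟨hc.2, Finset.mem_erase.2 ⟨hc.1, hX⟩⟩)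
  have hadj : ∀ x y : {X : Finset V // X ∈ Q.parts}, (redGraph G Q).Adj x y →
      (if x.1 = A ∨ x.1 = B then A ∪ B else x.1) = (if y.1 = A ∨ y.1 = B then A ∪ B else y.1) ∨
      (redGraph G P).Adj ⟨_, hmem x.2⟩ ⟨_, hmem y.2⟩ := by
    intro x y hxy
    by_cases hpe : (if x.1 = A ∨ x.1 = B then A ∪ B else x.1)
        = (if y.1 = A ∨ y.1 = B then A ∪ B else y.1)
    · exact Or.inl hpe
    · exact Or.inr (show _ ≠ _ ∧ Inhomog G _ _ from ⟨fun hcon => hpe (congrArg Subtype.val hcon),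
        inhomog_mono (hsub x.1) (hsub y.1) hxy.2⟩)
  have hreach : ∀ x y : {X : Finset V // X ∈ Q.parts}, (redGraph G Q).Reachable x y →
      (redGraph G P).Reachable ⟨_, hmem x.2⟩ ⟨_, hmem y.2⟩ := by
    intro x y hxy
    obtain ⟨p⟩ := hxy
    induction p with
    | nil => exact SimpleGraph.Reachable.refl _
    | @cons a b c ha p ih =>
      rcases hadj a b ha with he | he
      · exact (Subtype.ext he :
          (⟨_, hmem a.2⟩ : {X : Finset V // X ∈ P.parts}) = ⟨_, hmem b.2⟩) ▸ ih
      · exact he.reachable.trans ih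
  obtain ⟨X, hX, Y, hY, hv, hw, hr⟩ := hvw
  exact ⟨_, hmem hX, _, hmem hY, hsub X hv, hsub Y hw, hreach ⟨X, hX⟩ ⟨Y, hY⟩ hr⟩

lemma sameC_of_le {G : SimpleGraph V} {l : List (Finpartition (Finset.univ : Finset V))}
    (hc : l.Chain' MergeStep) {v w : V} {i : ℕ} (hi : i < l.length)
    (h : SameC G (l.get ⟨i, hi⟩) v w) :
    ∀ j, i ≤ j → ∀ hj : j < l.length, SameC G (l.get ⟨j, hj⟩) v w := by
  intro j hij
  induction j, hij using Nat.le_induction with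
  | base => intro hj; exact h
  | succ j hij ih =>
    intro hj
    have hj' : j < l.length := by omega
    have hstep : MergeStep (l.get ⟨j, hj'⟩) (l.get ⟨j + 1, hj⟩) :=
      List.isChain_iff_getElem.1 hc j (by omega)
    exact sameC_of_mergeStep hstep (ih hj')

lemma cls_image_nonempty (G : SimpleGraph V) (P : Finpartition (Finset.univ : Finset V))
    (v : V) (e : V ≃ Fin (Fintype.card V)) : ((cls G P v).image e).Nonempty :=
  Finset.Nonempty.image ⟨v, self_mem_cls G P v⟩ e

/-- Key of a vertex: the tuple of representatives of its red component classes, from the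
coarsest partition down to the finest, with the vertex itself appended for injectivity. -/
noncomputable def keyFun (G : SimpleGraph V) (l : List (Finpartition (Finset.univ : Finset V)))
    (e : V ≃ Fin (Fintype.card V)) (v : V) :
    Lex (Fin (l.length + 1) → Fin (Fintype.card V)) :=
  toLex fun j => if h : (j : ℕ) < l.length then
      ((cls G (l.get ⟨l.length - 1 - (j : ℕ), by omega⟩) v).image e).min'
        (cls_image_nonempty G _ v e)
    else e v

lemma keyFun_inj (G : SimpleGraph V) (l : List (Finpartition (Finset.univ : Finset V)))
    (e : V ≃ Fin (Fintype.card V)) : Function.Injective (keyFun G l e) := by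
  intro v w h
  have h2 := congrFun (congrArg ofLex h) (Fin.last l.length)
  have hnot : ¬((Fin.last l.length : ℕ) < l.length) := by
    simp [Fin.val_last]
  simp only [keyFun, ofLex_toLex] at h2
  rw [dif_neg hnot, dif_neg hnot] at h2
  exact e.injective h2

/-- The linear order on `V` induced by the keys. -/
noncomputable def ordL (G : SimpleGraph V) (l : List (Finpartition (Finset.univ : Finset V)))
    (e : V ≃ Fin (Fintype.card V)) : LinearOrder V :=
  @LinearOrder.lift' V _ (lexLO (l.length + 1) (Fin (Fintype.card V))) (keyFun G l e)
    (keyFun_inj G l e)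

lemma ordL_le_iff (G : SimpleGraph V) (l : List (Finpartition (Finset.univ : Finset V)))
    (e : V ≃ Fin (Fintype.card V)) (v w : V) :
    (ordL G l e).le v w ↔
      (lexLO (l.length + 1) (Fin (Fintype.card V))).le (keyFun G l e v) (keyFun G l e w) :=
  Iff.rfl

lemma sameC_of_between (G : SimpleGraph V) (l : List (Finpartition (Finset.univ : Finset V)))
    (hc : l.Chain' MergeStep) (e : V ≃ Fin (Fintype.card V)) (t : Fin l.length) {v u w : V}
    (hvw : SameC G (l.get t) v w)
    (h1 : (ordL G l e).le v u) (h2 : (ordL G l e).le u w) :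
    SameC G (l.get t) v u := by
  classical
  have hm1 : (t : ℕ) < l.length := t.isLt
  have hkeys : ∀ j : Fin (l.length + 1), (j : ℕ) ≤ l.length - 1 - (t : ℕ) →
      ofLex (keyFun G l e v) j = ofLex (keyFun G l e w) j := by
    intro j hj
    have hjm : (j : ℕ) < l.length := by omega
    have hlev : (t : ℕ) ≤ l.length - 1 - (j : ℕ) := by omega
    have hlt2 : l.length - 1 - (j : ℕ) < l.length := by omega
    have hsame : SameC G (l.get ⟨l.length - 1 - (j : ℕ), hlt2⟩) v w :=
      sameC_of_le hc t.isLt hvw (l.length - 1 - (j : ℕ)) hlev hlt2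
    have hcls : cls G (l.get ⟨l.length - 1 - (j : ℕ), hlt2⟩) v
        = cls G (l.get ⟨l.length - 1 - (j : ℕ), hlt2⟩) w := cls_congr hsame
    simp only [keyFun, ofLex_toLex]
    rw [dif_pos hjm, dif_pos hjm]
    simp only [hcls]
  have hJ : l.length - 1 - (t : ℕ) < l.length + 1 := by omega
  have hs := lex_sandwich (m := l.length + 1) (γ := Fin (Fintype.card V))
    (a := ofLex (keyFun G l e v)) (b := ofLex (keyFun G l e u)) (c := ofLex (keyFun G l e w))
    ((ordL_le_iff G l e v u).1 h1) ((ordL_le_iff G l e u w).1 h2)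
    (J := ⟨l.length - 1 - (t : ℕ), hJ⟩) (fun j hj => hkeys j hj)
  have hkey := hs ⟨l.length - 1 - (t : ℕ), hJ⟩ (le_refl _)
  have hJm : ((⟨l.length - 1 - (t : ℕ), hJ⟩ : Fin (l.length + 1)) : ℕ) < l.length := by
    show l.length - 1 - (t : ℕ) < l.length
    omega
  simp only [keyFun, ofLex_toLex] at hkey
  rw [dif_pos hJm, dif_pos hJm] at hkey
  have hidx2 : l.length - 1 - (l.length - 1 - (t : ℕ)) < l.length := by omega
  have hmem1 := Finset.min'_mem
    ((cls G (l.get ⟨l.length - 1 - (l.length - 1 - (t : ℕ)), hidx2⟩) v).image ⇑e)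
    (cls_image_nonempty G _ v e)
  have hmem2 := Finset.min'_mem
    ((cls G (l.get ⟨l.length - 1 - (l.length - 1 - (t : ℕ)), hidx2⟩) u).image ⇑e)
    (cls_image_nonempty G _ u e)
  obtain ⟨av, hav, hev⟩ := Finset.mem_image.1 hmem1
  obtain ⟨au, hau, heu⟩ := Finset.mem_image.1 hmem2
  have heq : av = au := e.injective (by rw [hev, heu]; exact hkey)
  have hgt : (⟨l.length - 1 - (l.length - 1 - (t : ℕ)), hidx2⟩ : Fin l.length) = t := by
    apply Fin.ext
    show l.length - 1 - (l.length - 1 - (t : ℕ)) = (t : ℕ)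
    omega
  rw [hgt] at hav hau
  subst heq
  exact sameC_trans (mem_cls.1 hav) (sameC_symm (mem_cls.1 hau))

end CtwwAux

section OrderedAux
variable [LinearOrder V]

lemma conv_mono {A B : Finset V} (h : A ⊆ B) : conv A ⊆ conv B := by
  intro x hx
  unfold conv at hx ⊢
  rw [Finset.mem_filter] at hx ⊢
  obtain ⟨-, ⟨a, ha, hax⟩, ⟨b, hb, hxb⟩⟩ := hx
  exact ⟨Finset.mem_univ x, ⟨a, h ha, hax⟩, ⟨b, h hb, hxb⟩⟩

/-- Each red component class (at each step) is order-convex. -/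
def GoodOrder (G : SimpleGraph V) (l : List (Finpartition (Finset.univ : Finset V))) : Prop :=
  ∀ (t : Fin l.length) (v : V), conv (cls G (l.get t) v) ⊆ cls G (l.get t) v

lemma stretch_bound (G : SimpleGraph V) (l : List (Finpartition (Finset.univ : Finset V)))
    (hgood : GoodOrder G l) (t : Fin l.length) :
    stretchPartition G (l.get t) ≤ maxRedComponentSize G (l.get t) - 1 := by
  classical
  set P := l.get t with hP
  unfold stretchPartition
  apply Finset.sup_le
  intro X hX
  obtain ⟨v, hv⟩ := P.nonempty_of_mem_parts hX
  have hXc : X ⊆ cls G P v := by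
    intro x hx
    exact mem_cls.2 ⟨X, hX, X, hX, hv, hx, SimpleGraph.Reachable.refl _⟩
  have hD : redClosedNbhd G P X ⊆ cls G P v := by
    intro x hx
    rcases Finset.mem_union.1 hx with h | h
    · exact hXc h
    · obtain ⟨Y, hYf, hxY⟩ := Finset.mem_biUnion.1 h
      have hYm := Finset.mem_filter.1 hYf
      have hYp := hYm.1
      have hYX := hYm.2.1
      have hinh := hYm.2.2
      refine mem_cls.2 ⟨X, hX, Y, hYp, hv, hxY, SimpleGraph.Adj.reachable ?_⟩
      exact (show _ ≠ _ ∧ Inhomog G _ _ from ⟨fun hcon => hYX (congrArg Subtype.val hcon).symm, hinh⟩)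
  set R : Finset (Finset V) := P.parts.filter
      (fun Y => ∃ hY : Y ∈ P.parts, (redGraph G P).Reachable ⟨X, hX⟩ ⟨Y, hY⟩) with hR
  have hXR : X ∈ R := Finset.mem_filter.2 ⟨hX, hX, SimpleGraph.Reachable.refl _⟩
  have hsub : (P.parts.erase X).filter (fun Y => Conflict Y (redClosedNbhd G P X))
      ⊆ R.erase X := by
    intro Y hY
    obtain ⟨hYe, hconf⟩ := Finset.mem_filter.1 hY
    obtain ⟨hYX, hYp⟩ := Finset.mem_erase.1 hYe
    obtain ⟨z, hz⟩ := hconf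
    obtain ⟨hz1, hz2⟩ := Finset.mem_inter.1 hz
    obtain ⟨y0, hy0⟩ := P.nonempty_of_mem_parts hYp
    have hY0c : Y ⊆ cls G P y0 := by
      intro x hx
      exact mem_cls.2 ⟨Y, hYp, Y, hYp, hy0, hx, SimpleGraph.Reachable.refl _⟩
    have hzv : z ∈ cls G P v := hgood t v (conv_mono hD hz2)
    have hzy : z ∈ cls G P y0 := hgood t y0 (conv_mono hY0c hz1)
    have hvy : SameC G P v y0 := sameC_trans (mem_cls.1 hzv) (sameC_symm (mem_cls.1 hzy))
    obtain ⟨X', hX', Y', hY', hvX', hy0Y', hr⟩ := hvy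
    have e1 : X' = X := P.eq_of_mem_parts hX' hX hvX' hv
    have e2 : Y' = Y := P.eq_of_mem_parts hY' hYp hy0Y' hy0
    subst e1; subst e2
    exact Finset.mem_erase.2 ⟨hYX, Finset.mem_filter.2 ⟨hYp, hY', hr⟩⟩
  have hcard : R.card ≤ maxRedComponentSize G P := by
    have himg : R = (Finset.univ.filter fun Y : {Y : Finset V // Y ∈ P.parts} =>
        (redGraph G P).Reachable ⟨X, hX⟩ Y).image Subtype.val := by
      ext Z
      simp only [hR, Finset.mem_filter, Finset.mem_image, Finset.mem_univ, true_and]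
      constructor
      · rintro ⟨hZ, hZ2, hr⟩
        exact ⟨⟨Z, hZ⟩, hr, rfl⟩
      · rintro ⟨⟨Z', hZ'⟩, hr, rfl⟩
        exact ⟨hZ', hZ', hr⟩
    rw [himg, Finset.card_image_of_injective _ Subtype.val_injective]
    unfold maxRedComponentSize
    exact Finset.le_sup (f := fun X : {Y : Finset V // Y ∈ P.parts} =>
      (Finset.univ.filter fun Y => (redGraph G P).Reachable X Y).card)
      (Finset.mem_univ (⟨X, hX⟩ : {Y : Finset V // Y ∈ P.parts}))
  calc stretchPart G P X
      = ((P.parts.erase X).filter (fun Y => Conflict Y (redClosedNbhd G P X))).card := rfl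
    _ ≤ (R.erase X).card := Finset.card_le_card hsub
    _ = R.card - 1 := Finset.card_erase_of_mem hXR
    _ ≤ maxRedComponentSize G P - 1 := Nat.sub_le_sub_right hcard 1

end OrderedAux

lemma ordL_good (G : SimpleGraph V) (l : List (Finpartition (Finset.univ : Finset V)))
    (hc : l.Chain' MergeStep) (e : V ≃ Fin (Fintype.card V)) :
    @GoodOrder V _ _ (ordL G l e) G l := by
  intro t v x hx
  unfold conv at hx
  rw [Finset.mem_filter] at hx
  obtain ⟨-, ⟨a, ha, hax⟩, ⟨b, hb, hxb⟩⟩ := hx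
  have hab : SameC G (l.get t) a b := sameC_trans (sameC_symm (mem_cls.1 ha)) (mem_cls.1 hb)
  have hax' : SameC G (l.get t) a x := sameC_of_between G l hc e t hab hax hxb
  exact mem_cls.2 (sameC_trans (mem_cls.1 ha) hax')

section SeqExists

lemma univ_parts_card_pos [Nonempty V] (Q : Finpartition (Finset.univ : Finset V)) :
    0 < Q.parts.card := by
  rcases Nat.eq_zero_or_pos Q.parts.card with h | h
  · exfalso
    have h0 : Q.parts = ∅ := Finset.card_eq_zero.1 h
    have h2 : (Finset.univ : Finset V) = ⊥ := by
      rw [← Q.sup_parts, h0, Finset.sup_empty]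
    rw [Finset.bot_eq_empty] at h2
    exact Finset.univ_nonempty.ne_empty h2
  · exact h

lemma exists_mergeStep (Q : Finpartition (Finset.univ : Finset V)) {A B : Finset V}
    (hA : A ∈ Q.parts) (hB : B ∈ Q.parts) (hAB : A ≠ B) :
    ∃ P : Finpartition (Finset.univ : Finset V), MergeStep Q P := by
  classical
  have hQpd : (Q.parts : Set (Finset V)).PairwiseDisjoint id :=
    Finset.supIndep_iff_pairwiseDisjoint.1 Q.supIndep
  have hEsub : (Q.parts.erase A).erase B ⊆ Q.parts :=
    (Finset.erase_subset _ _).trans (Finset.erase_subset _ _)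
  have hdisj : ∀ C ∈ (Q.parts.erase A).erase B, Disjoint (A ∪ B) C := by
    intro C hC
    have h1 := Finset.mem_erase.1 hC
    have h2 := Finset.mem_erase.1 h1.2
    refine Finset.disjoint_union_left.2 ⟨?_, ?_⟩
    · exact hQpd (Finset.mem_coe.2 hA) (Finset.mem_coe.2 (hEsub hC)) (Ne.symm h2.1)
    · exact hQpd (Finset.mem_coe.2 hB) (Finset.mem_coe.2 (hEsub hC)) (Ne.symm h1.1)
  refine ⟨⟨insert (A ∪ B) ((Q.parts.erase A).erase B), ?_, ?_, ?_⟩, A, hA, B, hB, hAB, rfl⟩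
  · rw [Finset.supIndep_iff_pairwiseDisjoint, Finset.coe_insert]
    refine Set.pairwiseDisjoint_insert.2 ⟨hQpd.subset ?_, fun C hC _ => hdisj C hC⟩
    exact_mod_cast hEsub
  · apply le_antisymm
    · exact Finset.sup_le fun X _ => le_top.trans_eq Finset.top_eq_univ
    · rw [Finset.le_iff_subset]
      intro v hv
      rw [Finset.mem_sup]
      obtain ⟨X, hXp, hvX⟩ := Q.exists_mem (Finset.mem_univ v)
      by_cases h1 : X = A
      · exact ⟨A ∪ B, Finset.mem_insert_self _ _, Finset.mem_union_left _ (h1 ▸ hvX)⟩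
      · by_cases h2 : X = B
        · exact ⟨A ∪ B, Finset.mem_insert_self _ _, Finset.mem_union_right _ (h2 ▸ hvX)⟩
        · exact ⟨X, Finset.mem_insert_of_mem
            (Finset.mem_erase.2 ⟨h2, Finset.mem_erase.2 ⟨h1, hXp⟩⟩), hvX⟩
  · intro hbot
    rcases Finset.mem_insert.1 hbot with h | h
    · obtain ⟨a, haA⟩ := Q.nonempty_of_mem_parts hA
      have ha2 : a ∈ A ∪ B := Finset.mem_union_left _ haA
      rw [← h] at ha2
      simp at ha2
    · exact Q.bot_notMem (hEsub h)

lemma exists_chain_to_top [Nonempty V] :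
    ∀ (n : ℕ) (Q : Finpartition (Finset.univ : Finset V)), Q.parts.card ≤ n →
    ∃ l : List (Finpartition (Finset.univ : Finset V)),
      l.head? = some Q ∧ (∃ P, l.getLast? = some P ∧ P.parts = {Finset.univ}) ∧
      l.Chain' MergeStep := by
  intro n
  induction n with
  | zero =>
    intro Q hQ
    have hpos := univ_parts_card_pos Q
    omega
  | succ n ih =>
    intro Q hQ
    by_cases h1 : Q.parts.card ≤ 1
    · have hcard : Q.parts.card = 1 := le_antisymm h1 (univ_parts_card_pos Q)
      obtain ⟨X, hX⟩ := Finset.card_eq_one.1 hcard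
      have hXuniv : X = Finset.univ := by
        have hsp := Q.sup_parts
        rw [hX] at hsp
        simpa using hsp
      refine ⟨[Q], rfl, ⟨Q, rfl, ?_⟩, List.isChain_singleton _⟩
      rw [hX, hXuniv]
    · push_neg at h1
      obtain ⟨A, hA, B, hB, hAB⟩ := Finset.one_lt_card.1 h1
      obtain ⟨P, hmerge⟩ := exists_mergeStep Q hA hB hAB
      have hcard : P.parts.card ≤ n := by
        obtain ⟨A', hA', B', hB', hAB', hparts⟩ := hmerge
        rw [hparts]
        have hB'e : B' ∈ Q.parts.erase A' := Finset.mem_erase.2 ⟨Ne.symm hAB', hB'⟩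
        calc (insert (A' ∪ B') ((Q.parts.erase A').erase B')).card
            ≤ ((Q.parts.erase A').erase B').card + 1 := Finset.card_insert_le _ _
          _ = (Q.parts.erase A').card - 1 + 1 := by rw [Finset.card_erase_of_mem hB'e]
          _ = Q.parts.card - 1 - 1 + 1 := by rw [Finset.card_erase_of_mem hA']
          _ ≤ n := by omega
      obtain ⟨l', hhead', hlast', hchain'⟩ := ih P hcard
      refine ⟨Q :: l', rfl, ?_, ?_⟩
      · obtain ⟨Pl, hPl, hPlparts⟩ := hlast'
        refine ⟨Pl, ?_, hPlparts⟩
        cases l' with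
        | nil => simp at hhead'
        | cons c t => rw [List.getLast?_cons_cons]; exact hPl
      · refine List.isChain_cons.2 ⟨?_, hchain'⟩
        intro y hy
        rw [hhead'] at hy
        rw [Option.mem_def] at hy
        injection hy with hy
        rw [← hy]
        exact hmerge

lemma exists_partitionSeq [Nonempty V] :
    ∃ l : List (Finpartition (Finset.univ : Finset V)), IsPartitionSeq l := by
  classical
  obtain ⟨l, hhead, hlast, hchain⟩ :=
    exists_chain_to_top (⊥ : Finpartition (Finset.univ : Finset V)).parts.card ⊥ (le_refl _)
  refine ⟨l, ⟨⊥, hhead, ?_⟩, hlast, hchain⟩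
  intro X hX
  rw [Finpartition.parts_bot] at hX
  obtain ⟨a, -, rfl⟩ := Finset.mem_map.1 hX
  exact Finset.card_singleton a

lemma maxRed_le_card (G : SimpleGraph V) (P : Finpartition (Finset.univ : Finset V)) :
    maxRedComponentSize G P ≤ Fintype.card V := by
  unfold maxRedComponentSize
  apply Finset.sup_le
  intro X _
  calc (Finset.univ.filter fun Y => (redGraph G P).Reachable X Y).card
      ≤ (Finset.univ : Finset {X : Finset V // X ∈ P.parts}).card := Finset.card_filter_le _ _
    _ = P.parts.card := by rw [Finset.card_univ, Fintype.card_coe]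
    _ ≤ (Finset.univ : Finset V).card := P.card_parts_le_card
    _ = Fintype.card V := Finset.card_univ

end SeqExists

/-- For every finite simple graph `G` with at least one vertex,
the stretch-width of `G` is at most its component twin-width minus 1. -/
theorem stw_le_ctww_sub_one {V : Type} [Fintype V] [DecidableEq V] [Nonempty V]
    (G : SimpleGraph V) :
    stw G ≤ ctww G - 1 := by
  classical
  have hSne : {k | ∃ l, IsPartitionSeq l ∧ ∀ P ∈ l, maxRedComponentSize G P ≤ k}.Nonempty := by
    obtain ⟨l, hl⟩ := exists_partitionSeq (V := V)
    exact ⟨Fintype.card V, l, hl, fun P _ => maxRed_le_card G P⟩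
  obtain ⟨l, hl, hbd⟩ := Nat.sInf_mem hSne
  set e := Fintype.equivFin V with he
  have hchain := hl.2.2
  have hmain : ∀ P ∈ l, @stretchPartition V _ _ (ordL G l e) G P ≤ ctww G - 1 := by
    intro P hP
    obtain ⟨t, rfl⟩ := List.mem_iff_get.1 hP
    refine le_trans (@stretch_bound V _ _ (ordL G l e) G l (ordL_good G l hchain e) t) ?_
    exact Nat.sub_le_sub_right (hbd _ (l.get_mem t)) 1
  have h1 : @stwOrd V _ _ (ordL G l e) G ≤ ctww G - 1 := Nat.sInf_le ⟨l, hl, hmain⟩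
  have h2 : stw G ≤ @stwOrd V _ _ (ordL G l e) G := Nat.sInf_le (Set.mem_range_self _)
  exact le_trans h2 h1

end StretchPaper
end
end

section
/- For every integer h ≥ 1 and every vertex v of the graph A_3^h, the degree d of v satisfies (3^{h−1} − 1)/2 ≤ d ≤ 3^{h−1} − 1. -/
open Finset

noncomputable section
open scoped Classical
set_option linter.unusedSectionVars false
set_option linter.unusedVariables false

namespace StretchPaper

/-! ### Partitions, red graphs, component twin-width and stretch-width of graphs -/

variable {V : Type} [Fintype V] [DecidableEq V]

/-! ### Symmetric 0,1-matrices: stretch-width and divisions -/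

variable {n : ℕ}

private lemma not_eq_add3 (A B : ℕ) (hc : ¬ 3 ≤ A) : ¬ (A = B + 3) := by omega
private lemma iff_sub (A B : ℕ) (hc : 3 ≤ A) : (A = B + 3 ↔ B = A - 3) := by omega
private lemma add3_lt (A P : ℕ) (hc : ¬ 3 ≤ A) (h9 : 9 ≤ P) : A + 3 < P := by omega

private lemma card_filter_fin (N : ℕ) (P : ℕ → Prop) [DecidablePred P] :
    (Finset.univ.filter fun u : Fin N => P u).card = ((Finset.range N).filter P).card := by
  rw [Finset.card_filter, Finset.card_filter]
  exact Fin.sum_univ_eq_sum_range (fun i => if P i then 1 else 0) N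

private lemma card_div_slab {h : ℕ} (l c : ℕ) (hl : l ≤ h) :
    (Finset.univ.filter fun u : Fin (3^h) => (u:ℕ) / 3^l = c).card
      = if c < 3^(h-l) then 3^l else 0 := by
  have h3 : (0:ℕ) < 3^l := pow_pos (by norm_num) l
  have hN : (3:ℕ)^h = 3^(h-l) * 3^l := by rw [← pow_add]; congr 1; omega
  rw [card_filter_fin (3^h) (fun x => x / 3^l = c)]
  have hset : (Finset.range (3^h)).filter (fun x => x / 3^l = c)
      = Finset.Ico (c * 3^l) (min ((c+1) * 3^l) (3^h)) := by
    ext x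
    simp only [Finset.mem_filter, Finset.mem_range, Finset.mem_Ico, lt_min_iff]
    constructor
    · rintro ⟨hx, rfl⟩
      refine ⟨Nat.div_mul_le_self x _, ?_, hx⟩
      rw [add_mul, one_mul]
      exact Nat.lt_div_mul_add h3
    · rintro ⟨h1, h2, h3'⟩
      exact ⟨h3', Nat.div_eq_of_lt_le h1 h2⟩
  rw [hset, Nat.card_Ico]
  by_cases hc : c < 3^(h-l)
  · have hle : (c+1) * 3^l ≤ 3^h := by
      rw [hN]; exact Nat.mul_le_mul_right _ (by omega)
    rw [if_pos hc, min_eq_left hle, add_mul, one_mul, Nat.add_sub_cancel_left]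
  · rw [if_neg hc]
    have : (3:ℕ)^h ≤ c * 3^l := by
      rw [hN]; exact Nat.mul_le_mul_right _ (by omega)
    exact Nat.sub_eq_zero_of_le (le_trans (min_le_right _ _) this)

private lemma div_close (a m : ℕ) (hm : 3 ≤ m) :
    (a + 3) / m ≤ a / m + 1 ∧ a / m ≤ (a + 3) / m := by
  constructor
  · calc (a+3)/m ≤ (a+m)/m := Nat.div_le_div_right (by omega)
      _ = a/m + 1 := Nat.add_div_right a (by omega)
  · exact Nat.div_le_div_right (by omega)

/-- Every vertex of `A_3^h` has degree between `(3^{h−1} − 1)/2` and `3^{h−1} − 1`. -/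
theorem Agraph_degree_bounds (h : ℕ) (hh : 1 ≤ h) (v : Fin (3 ^ h)) :
    (3 ^ (h - 1) - 1) / 2 ≤ (Finset.univ.filter fun u => (Agraph h).Adj v u).card ∧
    (Finset.univ.filter fun u => (Agraph h).Adj v u).card ≤ 3 ^ (h - 1) - 1 := by

  have hG : ∀ u w : Fin (3^h), (Agraph h).Adj u w ↔ u ≠ w ∧ ∃ l < h,
      ((u : ℕ) / 3 ^ l = (w : ℕ) / 3 ^ l + 3 ∨ (w : ℕ) / 3 ^ l = (u : ℕ) / 3 ^ l + 3) :=
    fun u w => Iff.rfl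
  classical
  set T : ℕ → Finset (Fin (3^h)) := fun l =>
    Finset.univ.filter fun u => (v:ℕ)/3^l = (u:ℕ)/3^l + 3 ∨ (u:ℕ)/3^l = (v:ℕ)/3^l + 3 with hT
  have hvlt : ∀ l, l ≤ h → (v:ℕ)/3^l < 3^(h-l) := by
    intro l hl
    rw [Nat.div_lt_iff_lt_mul (pow_pos (by norm_num) l), ← pow_add]
    have he : h - l + l = h := by omega
    rw [he]; exact v.2
  have hdecomp : (Finset.univ.filter fun u => (Agraph h).Adj v u) = (Finset.range h).biUnion T := by
    ext u
    simp only [Finset.mem_filter, Finset.mem_univ, true_and, Finset.mem_biUnion,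
      Finset.mem_range, hG, hT]
    constructor
    · rintro ⟨hne, l, hl, hd⟩; exact ⟨l, hl, hd⟩
    · rintro ⟨l, hl, hd⟩
      refine ⟨fun he => ?_, l, hl, hd⟩
      subst he; omega
  have hdisj : ∀ l1 ∈ Finset.range h, ∀ l2 ∈ Finset.range h, l1 ≠ l2 →
      Disjoint (T l1) (T l2) := by
    have key : ∀ l1 l2 : ℕ, l1 < l2 → ∀ u : Fin (3^h), u ∈ T l1 → u ∉ T l2 := by
      intro l1 l2 hlt u h1 h2
      simp only [hT, Finset.mem_filter, Finset.mem_univ, true_and] at h1 h2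
      have hm : 3 ≤ 3^(l2 - l1) := by
        calc (3:ℕ) = 3^1 := by norm_num
          _ ≤ 3^(l2-l1) := Nat.pow_le_pow_right (by norm_num) (by omega)
      have hu2 : (u:ℕ)/3^l2 = ((u:ℕ)/3^l1) / 3^(l2-l1) := by
        rw [Nat.div_div_eq_div_mul, ← pow_add]; congr 2; omega
      have hv2 : (v:ℕ)/3^l2 = ((v:ℕ)/3^l1) / 3^(l2-l1) := by
        rw [Nat.div_div_eq_div_mul, ← pow_add]; congr 2; omega
      rw [hu2, hv2] at h2
      rcases h1 with hc | hc
      · rw [hc] at h2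
        have := div_close ((u:ℕ)/3^l1) (3^(l2-l1)) hm
        omega
      · rw [hc] at h2
        have := div_close ((v:ℕ)/3^l1) (3^(l2-l1)) hm
        omega
    intro l1 h1 l2 h2 hne
    rcases Nat.lt_or_ge l1 l2 with hlt | hge
    · exact Finset.disjoint_left.mpr fun u hu1 hu2 => key l1 l2 hlt u hu1 hu2
    · exact Finset.disjoint_left.mpr fun u hu1 hu2 =>
        key l2 l1 (by omega) u hu2 hu1
  have hcard : (Finset.univ.filter fun u => (Agraph h).Adj v u).card
      = ∑ l ∈ Finset.range h, (T l).card := by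
    rw [hdecomp]; exact Finset.card_biUnion hdisj
  have hTcard : ∀ l, l ≤ h → (T l).card =
      (if (v:ℕ)/3^l + 3 < 3^(h-l) then 3^l else 0)
      + (if 3 ≤ (v:ℕ)/3^l then 3^l else 0) := by
    intro l hl
    have hsplit : T l = (Finset.univ.filter fun u : Fin (3^h) => (u:ℕ)/3^l = (v:ℕ)/3^l + 3)
        ∪ (Finset.univ.filter fun u : Fin (3^h) => (v:ℕ)/3^l = (u:ℕ)/3^l + 3) := by
      rw [hT, ← Finset.filter_or]
      apply Finset.filter_congr
      intro u _
      constructor <;> (intro hc; tauto)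
    have hdisj2 : Disjoint
        (Finset.univ.filter fun u : Fin (3^h) => (u:ℕ)/3^l = (v:ℕ)/3^l + 3)
        (Finset.univ.filter fun u : Fin (3^h) => (v:ℕ)/3^l = (u:ℕ)/3^l + 3) := by
      rw [Finset.disjoint_left]
      intro u hu1 hu2
      simp only [Finset.mem_filter] at hu1 hu2
      omega
    rw [hsplit, Finset.card_union_of_disjoint hdisj2]
    have hA : (Finset.univ.filter fun u : Fin (3^h) => (u:ℕ)/3^l = (v:ℕ)/3^l + 3).card
        = if (v:ℕ)/3^l + 3 < 3^(h-l) then 3^l else 0 := card_div_slab l _ hl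
    have hB : (Finset.univ.filter fun u : Fin (3^h) => (v:ℕ)/3^l = (u:ℕ)/3^l + 3).card
        = if 3 ≤ (v:ℕ)/3^l then 3^l else 0 := by
      by_cases hc : 3 ≤ (v:ℕ)/3^l
      · have he : (Finset.univ.filter fun u : Fin (3^h) => (v:ℕ)/3^l = (u:ℕ)/3^l + 3)
            = Finset.univ.filter fun u : Fin (3^h) => (u:ℕ)/3^l = (v:ℕ)/3^l - 3 := by
          apply Finset.filter_congr; intro u _
          simpa using iff_sub ((v:ℕ)/3^l) ((u:ℕ)/3^l) hc
        rw [he, card_div_slab l _ hl, if_pos hc]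
        have hlt := hvlt l hl
        rw [if_pos (lt_of_le_of_lt (Nat.sub_le _ 3) hlt)]
      · have he : (Finset.univ.filter fun u : Fin (3^h) => (v:ℕ)/3^l = (u:ℕ)/3^l + 3) = ∅ := by
          rw [Finset.filter_eq_empty_iff]; intro u _
          exact not_eq_add3 ((v:ℕ)/3^l) ((u:ℕ)/3^l) hc
        rw [he, if_neg hc, Finset.card_empty]
    rw [hA, hB]
  have hub : ∀ l, l ≤ h → (T l).card ≤ 2 * 3^l := by
    intro l hl; rw [hTcard l hl]; split_ifs <;> omega
  have htop : (T (h-1)).card = 0 := by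
    rw [hTcard (h-1) (by omega)]
    have h1 : h - (h-1) = 1 := by omega
    have hv3 : (v:ℕ)/3^(h-1) < 3 := by
      have := hvlt (h-1) (by omega); rw [h1, pow_one] at this; exact this
    have c1 : ¬ ((v:ℕ)/3^(h-1) + 3 < 3) := by
      exact fun hx => absurd hx (not_lt.mpr (le_add_self))
    have c2 : ¬ (3 ≤ (v:ℕ)/3^(h-1)) := not_le.mpr hv3
    rw [h1, pow_one, if_neg c1, if_neg c2]
  have hlb : ∀ l, l < h - 1 → 3^l ≤ (T l).card := by
    intro l hl
    rw [hTcard l (by omega)]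
    by_cases hc : 3 ≤ (v:ℕ)/3^l
    · rw [if_pos hc]; omega
    · have h9 : 9 ≤ 3^(h-l) := by
        calc (9:ℕ) = 3^2 := by norm_num
          _ ≤ 3^(h-l) := Nat.pow_le_pow_right (by norm_num) (by omega)
      rw [if_pos (add3_lt _ _ hc h9)]; omega
  have hsum3 : ∀ k : ℕ, 2 * ∑ l ∈ Finset.range k, 3^l + 1 = 3^k := by
    intro k; induction k with
    | zero => simp
    | succ k ih => rw [Finset.sum_range_succ, pow_succ]; omega
  have hsplit : ∑ l ∈ Finset.range h, (T l).card
      = ∑ l ∈ Finset.range (h-1), (T l).card + (T (h-1)).card := by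
    have h2 : h - 1 + 1 = h := by omega
    have hs := Finset.sum_range_succ (fun l => (T l).card) (h-1)
    rw [h2] at hs
    exact hs
  rw [hcard, hsplit, htop, Nat.add_zero]
  have hS := hsum3 (h-1)
  constructor
  · calc (3^(h-1) - 1)/2 = ∑ l ∈ Finset.range (h-1), 3^l := by omega
      _ ≤ ∑ l ∈ Finset.range (h-1), (T l).card :=
        Finset.sum_le_sum fun l hl => hlb l (Finset.mem_range.mp hl)
  · calc ∑ l ∈ Finset.range (h-1), (T l).card
        ≤ ∑ l ∈ Finset.range (h-1), 2 * 3^l :=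
          Finset.sum_le_sum fun l hl => hub l (by have := Finset.mem_range.mp hl; omega)
      _ = 2 * ∑ l ∈ Finset.range (h-1), 3^l := by rw [Finset.mul_sum]
      _ ≤ 3^(h-1) - 1 := by omega


end StretchPaper
end
end
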